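/- Let W be an n×n symmetric entrywise nonnegative real matrix with graph Laplacian L(W) = diag(W 1_n) − W, partitioned in blocks L₁ (l×l), L₂ (l×(n−l)), L₂ᵀ, L₃ ((n−l)×(n−l)) as L(W) = [[L₁, L₂],[L₂ᵀ, L₃]], and let λ₂ > 0, F_l ∈ ℝ^{l×c}, and Y_u ∈ ℝ^{(n−l)×c}. Then 2L₃ + λ₂ I_{n−l} is symmetric positive definite, and F_u ∈ ℝ^{(n−l)×c} minimizes the objective g(F_u) = trace(Fᵀ L(W) F) + (λ₂/2)‖F_u − Y_u‖²_F, where F = [F_l; F_u] stacks F_l on top of F_u, if and only if (2L₃ + λ₂ I_{n−l}) F_u = λ₂ Y_u − 2 L₂ᵀ F_l; in particular the minimizer is unique. -/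

import Mathlib

open Matrix

lemma aux_trace_sum {m c : ℕ} (X Y : Matrix (Fin m) (Fin c) ℝ) :
    Matrix.trace (Xᵀ * Y) = ∑ i, ∑ j, X i j * Y i j := by
  simp only [Matrix.trace, Matrix.diag_apply, Matrix.mul_apply, Matrix.transpose_apply]
  exact Finset.sum_comm

lemma aux_quad {m c : ℕ} (A : Matrix (Fin m) (Fin m) ℝ) (Δ : Matrix (Fin m) (Fin c) ℝ) :
    Matrix.trace (Δᵀ * A * Δ) = ∑ j, (fun i => Δ i j) ⬝ᵥ (A *ᵥ fun i => Δ i j) := by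
  simp only [Matrix.trace, Matrix.diag_apply, Matrix.mul_apply, Matrix.transpose_apply,
    dotProduct, Matrix.mulVec, Finset.sum_mul, Finset.mul_sum]
  refine Finset.sum_congr rfl fun j _ => ?_
  rw [Finset.sum_comm]
  refine Finset.sum_congr rfl fun i _ => Finset.sum_congr rfl fun k _ => by ring

lemma aux_trace_transpose_mul {m l c : ℕ} (X : Matrix (Fin l) (Fin m) ℝ)
    (Y : Matrix (Fin l) (Fin c) ℝ) (Δ : Matrix (Fin m) (Fin c) ℝ) :
    Matrix.trace (Yᵀ * (X * Δ)) = Matrix.trace (Δᵀ * (Xᵀ * Y)) := by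
  rw [← Matrix.trace_transpose (Yᵀ * (X * Δ))]
  simp only [Matrix.transpose_mul, Matrix.transpose_transpose]
  rw [Matrix.mul_assoc]

theorem lgc_based_label_inference
    (l m c : ℕ) (hm : 0 < m)
    (W : Matrix (Fin l ⊕ Fin m) (Fin l ⊕ Fin m) ℝ)
    (hWsym : Wᵀ = W) (hWnn : ∀ i j, 0 ≤ W i j)
    (LW : Matrix (Fin l ⊕ Fin m) (Fin l ⊕ Fin m) ℝ)
    (hLW : LW = Matrix.diagonal (fun i => ∑ j, W i j) - W)
    (L₂ : Matrix (Fin l) (Fin m) ℝ) (hL₂ : L₂ = LW.toBlocks₁₂)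
    (L₃ : Matrix (Fin m) (Fin m) ℝ) (hL₃ : L₃ = LW.toBlocks₂₂)
    (lam2 : ℝ) (hlam2 : 0 < lam2)
    (Fl : Matrix (Fin l) (Fin c) ℝ) (Yu : Matrix (Fin m) (Fin c) ℝ)
    (g : Matrix (Fin m) (Fin c) ℝ → ℝ)
    (hg : ∀ Fu, g Fu =
      Matrix.trace ((Matrix.fromRows Fl Fu)ᵀ * LW * Matrix.fromRows Fl Fu) +
        lam2 / 2 * ∑ i, ∑ j, (Fu i j - Yu i j) ^ 2) :
    (2 • L₃ + lam2 • (1 : Matrix (Fin m) (Fin m) ℝ)).PosDef ∧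
    (∀ Fu : Matrix (Fin m) (Fin c) ℝ,
      (∀ Fu' : Matrix (Fin m) (Fin c) ℝ, g Fu ≤ g Fu') ↔
        (2 • L₃ + lam2 • (1 : Matrix (Fin m) (Fin m) ℝ)) * Fu =
          lam2 • Yu - 2 • (L₂ᵀ * Fl)) ∧
    (∀ Fu Fu' : Matrix (Fin m) (Fin c) ℝ,
      (∀ F' : Matrix (Fin m) (Fin c) ℝ, g Fu ≤ g F') →
      (∀ F' : Matrix (Fin m) (Fin c) ℝ, g Fu' ≤ g F') →
      Fu = Fu') := by
  -- symmetry of LW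
  have hLWsym : LWᵀ = LW := by
    rw [hLW, Matrix.transpose_sub, Matrix.diagonal_transpose, hWsym]
  -- LW is positive semidefinite
  have hLWpsd : LW.PosSemidef := by
    refine Matrix.posSemidef_iff_dotProduct_mulVec.mpr ⟨?_, ?_⟩
    · show LWᴴ = LW
      ext i j
      simp only [Matrix.conjTranspose_apply, star_trivial]
      exact congrFun (congrFun hLWsym i) j
    · intro x
      simp only [star_trivial]
      have hmv : ∀ a, (LW *ᵥ x) a = (∑ j, W a j) * x a - ∑ j, W a j * x j := by
        intro a
        rw [hLW, Matrix.sub_mulVec]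
        simp only [Pi.sub_apply, Matrix.mulVec_diagonal]
        simp only [Matrix.mulVec, dotProduct]
      have expand : x ⬝ᵥ LW *ᵥ x = ∑ i, ∑ j, W i j * (x i ^ 2 - x i * x j) := by
        calc x ⬝ᵥ LW *ᵥ x = ∑ a, x a * ((∑ j, W a j) * x a - ∑ j, W a j * x j) := by
              simp [dotProduct, hmv]
          _ = ∑ i, ∑ j, W i j * (x i ^ 2 - x i * x j) := by
              refine Finset.sum_congr rfl fun a _ => ?_
              rw [mul_sub, Finset.sum_mul, Finset.mul_sum, Finset.mul_sum,
                ← Finset.sum_sub_distrib]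
              exact Finset.sum_congr rfl fun j _ => by ring
      have sym : ∑ i, ∑ j, W i j * (x i ^ 2 - x i * x j)
          = ∑ i, ∑ j, W i j * (x j ^ 2 - x j * x i) := by
        rw [Finset.sum_comm]
        refine Finset.sum_congr rfl fun i _ => Finset.sum_congr rfl fun j _ => ?_
        rw [show W j i = W i j from congrFun (congrFun hWsym i) j]
      have two_eq : 2 * (∑ i, ∑ j, W i j * (x i ^ 2 - x i * x j))
          = ∑ i, ∑ j, W i j * (x i - x j) ^ 2 := by
        rw [two_mul]
        nth_rewrite 2 [sym]
        rw [← Finset.sum_add_distrib]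
        refine Finset.sum_congr rfl fun i _ => ?_
        rw [← Finset.sum_add_distrib]
        refine Finset.sum_congr rfl fun j _ => by ring
      have hnn : 0 ≤ ∑ i, ∑ j, W i j * (x i - x j) ^ 2 :=
        Finset.sum_nonneg fun i _ => Finset.sum_nonneg fun j _ =>
          mul_nonneg (hWnn i j) (sq_nonneg _)
      rw [expand]
      nlinarith [two_eq, hnn]
  -- L₃ is positive semidefinite
  have hL₃psd : L₃.PosSemidef := by
    have : L₃ = LW.submatrix Sum.inr Sum.inr := by
      rw [hL₃]; ext i j; rfl
    rw [this]
    exact hLWpsd.submatrix _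
  set A : Matrix (Fin m) (Fin m) ℝ := 2 • L₃ + lam2 • (1 : Matrix (Fin m) (Fin m) ℝ) with hA
  set B : Matrix (Fin m) (Fin c) ℝ := lam2 • Yu - 2 • (L₂ᵀ * Fl) with hB
  -- A is positive definite
  have hApd : A.PosDef := by
    have h1 : ((2 : ℕ) • L₃).PosSemidef := by
      rw [two_smul]; exact hL₃psd.add hL₃psd
    have h2 : (lam2 • (1 : Matrix (Fin m) (Fin m) ℝ)).PosDef := by
      rw [Matrix.smul_one_eq_diagonal]
      exact Matrix.PosDef.diagonal fun _ => hlam2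
    exact Matrix.PosDef.posSemidef_add h1 h2
  -- quadratic form nonneg / pos
  have quadnn : ∀ Δ : Matrix (Fin m) (Fin c) ℝ, 0 ≤ Matrix.trace (Δᵀ * A * Δ) := by
    intro Δ
    rw [aux_quad]
    refine Finset.sum_nonneg fun j _ => ?_
    have := hApd.posSemidef.dotProduct_mulVec_nonneg (fun i => Δ i j)
    simpa using this
  -- block structure of LW
  have hL₂₁ : LW.toBlocks₂₁ = L₂ᵀ := by
    rw [hL₂]
    ext i j
    show LW (Sum.inr i) (Sum.inl j) = LW (Sum.inl j) (Sum.inr i)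
    exact congrFun (congrFun hLWsym (Sum.inl j)) (Sum.inr i)
  have hL₃sym : L₃ᵀ = L₃ := by
    rw [hL₃]
    ext i j
    show LW (Sum.inr j) (Sum.inr i) = LW (Sum.inr i) (Sum.inr j)
    exact congrFun (congrFun hLWsym (Sum.inr i)) (Sum.inr j)
  have hblock : ∀ X : Matrix (Fin m) (Fin c) ℝ,
      (Matrix.fromRows Fl X)ᵀ * LW * Matrix.fromRows Fl X =
        Flᵀ * (LW.toBlocks₁₁ * Fl + L₂ * X) + Xᵀ * (L₂ᵀ * Fl + L₃ * X) := by
    intro X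
    conv_lhs => rw [← Matrix.fromBlocks_toBlocks LW]
    rw [Matrix.mul_assoc, ← hL₂, ← hL₃, hL₂₁, Matrix.fromBlocks_mul_fromRows,
      Matrix.transpose_fromRows, Matrix.fromCols_mul_fromRows]
  -- transpose-trace identities
  have e1 : ∀ Δ : Matrix (Fin m) (Fin c) ℝ,
      Matrix.trace (Flᵀ * (L₂ * Δ)) = Matrix.trace (Δᵀ * (L₂ᵀ * Fl)) := fun Δ =>
    aux_trace_transpose_mul L₂ Fl Δ
  have e2 : ∀ Fu Δ : Matrix (Fin m) (Fin c) ℝ,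
      Matrix.trace (Fuᵀ * (L₃ * Δ)) = Matrix.trace (Δᵀ * (L₃ * Fu)) := by
    intro Fu Δ
    have h := aux_trace_transpose_mul L₃ Fu Δ
    rwa [hL₃sym] at h
  have e3 : ∀ Fu Δ : Matrix (Fin m) (Fin c) ℝ,
      ∑ i, ∑ j, ((Fu + Δ) i j - Yu i j) ^ 2 =
        (∑ i, ∑ j, (Fu i j - Yu i j) ^ 2) +
          (2 * Matrix.trace (Δᵀ * (Fu - Yu)) + Matrix.trace (Δᵀ * Δ)) := by
    intro Fu Δ
    rw [aux_trace_sum, aux_trace_sum, Finset.mul_sum, ← Finset.sum_add_distrib,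
      ← Finset.sum_add_distrib]
    refine Finset.sum_congr rfl fun i _ => ?_
    rw [Finset.mul_sum, ← Finset.sum_add_distrib, ← Finset.sum_add_distrib]
    refine Finset.sum_congr rfl fun j _ => ?_
    simp only [Matrix.add_apply, Matrix.sub_apply]
    ring
  -- the key quadratic expansion
  have key : ∀ Fu Δ : Matrix (Fin m) (Fin c) ℝ,
      g (Fu + Δ) = g Fu + Matrix.trace (Δᵀ * (A * Fu - B)) +
        Matrix.trace (Δᵀ * A * Δ) / 2 := by
    intro Fu Δ
    rw [hg, hg, hblock, hblock, e3]
    set S : ℝ := ∑ i, ∑ j, (Fu i j - Yu i j) ^ 2 with hS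
    simp only [hA, hB, Matrix.mul_add, Matrix.add_mul, Matrix.mul_sub, Matrix.sub_mul,
      Matrix.transpose_add, Matrix.smul_mul, Matrix.mul_smul, Matrix.one_mul,
      Matrix.trace_add, Matrix.trace_sub, Matrix.trace_smul, smul_eq_mul,
      Matrix.mul_assoc, two_smul, nsmul_eq_mul, Nat.cast_ofNat]
    simp only [e1, e2]
    ring
  -- the variational characterization
  have part2 : ∀ Fu : Matrix (Fin m) (Fin c) ℝ,
      (∀ Fu' : Matrix (Fin m) (Fin c) ℝ, g Fu ≤ g Fu') ↔ A * Fu = B := by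
    intro Fu
    constructor
    · intro hmin
      by_contra hne
      set R : Matrix (Fin m) (Fin c) ℝ := A * Fu - B with hRdef
      have hR : R ≠ 0 := fun h => hne (by rwa [hRdef, sub_eq_zero] at h)
      obtain ⟨i₀, j₀, hij⟩ : ∃ i j, R i j ≠ 0 := by
        by_contra h
        push_neg at h
        exact hR (by ext i j; simpa using h i j)
      set a : ℝ := Matrix.trace (Rᵀ * R) with hadef
      set b : ℝ := Matrix.trace (Rᵀ * A * R) with hbdef
      have ha : 0 < a := by
        rw [hadef, aux_trace_sum]
        refine Finset.sum_pos' (fun i _ => Finset.sum_nonneg fun j _ => mul_self_nonneg _)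
          ⟨i₀, Finset.mem_univ _, ?_⟩
        exact Finset.sum_pos' (fun j _ => mul_self_nonneg _)
          ⟨j₀, Finset.mem_univ _, mul_self_pos.mpr hij⟩
      have hb : 0 < b := by
        rw [hbdef, aux_quad]
        refine Finset.sum_pos' (fun j _ => by simpa using hApd.posSemidef.dotProduct_mulVec_nonneg (fun i => R i j))
          ⟨j₀, Finset.mem_univ _, ?_⟩
        have hcol : (fun i => R i j₀) ≠ 0 := by
          intro h
          exact hij (by simpa using congrFun h i₀)
        simpa using hApd.dotProduct_mulVec_pos hcol
      set t : ℝ := -(a / b) with htdef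
      have hkey := key Fu (t • R)
      have ht1 : Matrix.trace ((t • R)ᵀ * (A * Fu - B)) = t * a := by
        rw [hadef, ← hRdef]
        simp only [Matrix.transpose_smul, Matrix.smul_mul, Matrix.trace_smul, smul_eq_mul]
      have ht2 : Matrix.trace ((t • R)ᵀ * A * (t • R)) = t ^ 2 * b := by
        rw [hbdef]
        simp only [Matrix.transpose_smul, Matrix.smul_mul, Matrix.mul_smul,
          Matrix.trace_smul, smul_eq_mul]
        ring
      rw [ht1, ht2] at hkey
      have hlt : t * a + t ^ 2 * b / 2 < 0 := by
        have heq : t * a + t ^ 2 * b / 2 = -(a ^ 2 / (2 * b)) := by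
          rw [htdef]
          field_simp
          ring
        rw [heq]
        have : 0 < a ^ 2 / (2 * b) := div_pos (pow_pos ha 2) (by linarith)
        linarith
      have := hmin (Fu + t • R)
      rw [hkey] at this
      linarith
    · intro heq Fu'
      have h0 : A * Fu - B = 0 := sub_eq_zero.mpr heq
      have hk := key Fu (Fu' - Fu)
      rw [h0, Matrix.mul_zero, Matrix.trace_zero, add_zero] at hk
      have hfix : Fu + (Fu' - Fu) = Fu' := by abel
      rw [hfix] at hk
      rw [hk]
      exact le_add_of_nonneg_right (div_nonneg (quadnn _) (by norm_num))
  refine ⟨hApd, part2, ?_⟩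
  intro Fu Fu' h h'
  have e := (part2 Fu).mp h
  have e' := (part2 Fu').mp h'
  have hdet : IsUnit A.det := isUnit_iff_ne_zero.mpr hApd.det_pos.ne'
  have hcalc : A⁻¹ * (A * Fu) = A⁻¹ * (A * Fu') := by rw [e, e']
  rwa [← Matrix.mul_assoc, ← Matrix.mul_assoc, Matrix.nonsing_inv_mul A hdet,
    Matrix.one_mul, Matrix.one_mul] at hcalc
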